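/- Let α ∈ ℝ^m be a vector of non-negative reals summing to 1. Then for every n ≥ 1 there exists a vector s ∈ ℕ^m of natural numbers with ∑ s_i = n and |s_i/n − α_i| < 1/n for every i. -/

import Mathlib

/-- Rounding a probability vector: for `α ∈ ℝ^m` non-negative with `∑ αᵢ = 1` and any `n ≥ 1`,
there is `s ∈ ℕ^m` with `∑ sᵢ = n` and `|sᵢ/n − αᵢ| < 1/n` for every `i`. -/
theorem stmt0 (m : ℕ) (α : Fin m → ℝ) (hα : ∀ i, 0 ≤ α i)
    (hsum : ∑ i, α i = 1) (n : ℕ) (hn : 1 ≤ n) :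
    ∃ s : Fin m → ℕ, (∑ i, s i) = n ∧
      ∀ i, |(s i : ℝ) / n - α i| < 1 / n := by
  have hnpos : (0:ℝ) < n := by exact_mod_cast hn
  set F : Fin m → ℕ := fun i => ⌊(n : ℝ) * α i⌋₊ with hF
  have hFle : ∀ i, (F i : ℝ) ≤ (n : ℝ) * α i := fun i =>
    Nat.floor_le (mul_nonneg (Nat.cast_nonneg n) (hα i))
  have hFlt : ∀ i, (n : ℝ) * α i < F i + 1 := fun i => Nat.lt_floor_add_one _
  have hsumF : (∑ i, (F i : ℝ)) ≤ n := by
    calc (∑ i, (F i : ℝ)) ≤ ∑ i, (n : ℝ) * α i := Finset.sum_le_sum fun i _ => hFle i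
    _ = n := by rw [← Finset.mul_sum, hsum, mul_one]
  have hsumFn : (∑ i, F i) ≤ n := by exact_mod_cast (by push_cast; exact hsumF : ((∑ i, F i : ℕ) : ℝ) ≤ n)
  set d : ℕ := n - ∑ i, F i with hd
  have hdR : (d : ℝ) = n - ∑ i, (F i : ℝ) := by
    rw [hd]; push_cast [Nat.cast_sub hsumFn]; ring
  set T : Finset (Fin m) := Finset.univ.filter (fun i => (F i : ℝ) < (n:ℝ) * α i) with hT
  have hdT : (d : ℝ) = ∑ i ∈ T, ((n:ℝ) * α i - F i) := by
    rw [hdR]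
    have : (n:ℝ) - ∑ i, (F i : ℝ) = ∑ i, ((n:ℝ) * α i - F i) := by
      rw [Finset.sum_sub_distrib, ← Finset.mul_sum, hsum, mul_one]
    rw [this]
    symm
    apply Finset.sum_subset (Finset.subset_univ T)
    intro i _ hiT
    simp only [hT, Finset.mem_filter, Finset.mem_univ, true_and, not_lt] at hiT
    linarith [hFle i]
  have hdcard : d ≤ T.card := by
    have : (d : ℝ) ≤ T.card := by
      rw [hdT]
      calc ∑ i ∈ T, ((n:ℝ) * α i - F i) ≤ ∑ i ∈ T, (1:ℝ) :=
        Finset.sum_le_sum fun i _ => by linarith [hFlt i]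
      _ = T.card := by simp
    exact_mod_cast this
  obtain ⟨S, hST, hScard⟩ := Finset.exists_subset_card_eq hdcard
  refine ⟨fun i => F i + (if i ∈ S then 1 else 0), ?_, ?_⟩
  · rw [Finset.sum_add_distrib]
    have : (∑ i, if i ∈ S then 1 else 0) = S.card := by
      simp [Finset.sum_ite_mem, Finset.univ_inter]
    rw [this, hScard, hd]
    omega
  · intro i
    have key : |((F i + (if i ∈ S then 1 else 0) : ℕ) : ℝ) - (n:ℝ) * α i| < 1 := by
      by_cases hiS : i ∈ S
      · have hiT : i ∈ T := hST hiS
        simp only [hT, Finset.mem_filter, Finset.mem_univ, true_and] at hiT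
        simp only [hiS, if_true]
        push_cast
        rw [abs_lt]
        constructor <;> linarith [hFlt i]
      · simp only [hiS, if_false]
        push_cast
        rw [abs_lt]
        constructor <;> linarith [hFle i, hFlt i]
    have : |((F i + (if i ∈ S then 1 else 0) : ℕ) : ℝ) / n - α i| =
        |((F i + (if i ∈ S then 1 else 0) : ℕ) : ℝ) - (n:ℝ) * α i| / n := by
      rw [← abs_of_pos hnpos, ← abs_div]
      congr 1
      field_simp
      rw [abs_of_pos hnpos]; ring
    rw [this]
    exact (div_lt_div_iff_of_pos_right hnpos).mpr key
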